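/- Let (A,q) be a pre-metric group and (λ,ω,t) a braided zesting datum of (A,q). (i) If f, f' : Â → ℂˣ are such that both (λ,ω,t,f) and (λ,ω,t,f') are ribbon zesting data, then the map χ ↦ f(χ)/f'(χ) is a group homomorphism Â → {±1}. (ii) Conversely, if (λ,ω,t,f) is a ribbon zesting datum and χ₀ : Â → {±1} is any group homomorphism, then (λ,ω,t, f·χ₀) is also a ribbon zesting datum. Hence the set of ribbon zesting data extending a fixed braided zesting datum, if nonempty, is a torsor over Hom(Â, {±1}). -/

import Mathlib

/-!
Statement 9: the set of ribbon zesting data extending a fixed braided zesting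
datum of a pre-metric group `(A,q)`, if nonempty, is a torsor over
`Hom(Â, {±1})`.
-/

namespace Zesting

/-- Cancellation lemma in a commutative group: if `a * k = b * T` and
`a' * k = b' * T`, then `a / a' = b / b'`. -/
private lemma ratio_eq {G : Type*} [CommGroup G] {a a' c c' k : G}
    (h1 : a * k = c) (h2 : a' * k = c') : a / a' = c / c' := by
  rw [← h1, ← h2, mul_div_mul_right_eq_div]

private lemma pm_one {u : ℂˣ} (h : u * u = 1) : u = 1 ∨ u = -1 := by
  have h' : (u : ℂ) * (u : ℂ) = 1 := by
    have := congrArg Units.val h; simpa using this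
  rcases mul_self_eq_one_iff.mp h' with h1 | h1
  · exact Or.inl (Units.ext (by simp [h1]))
  · exact Or.inr (Units.ext (by simp [h1]))

variable {A : Type*} [CommGroup A]

/-- The bicharacter `b(x,y) = q(x)q(y)/q(xy)` associated with `q`. -/
def bchar (q : A → ℂˣ) (x y : A) : ℂˣ := q x * q y * (q (x * y))⁻¹

/-- `(A, q)` is a pre-metric group. -/
def IsPreMetric (q : A → ℂˣ) : Prop :=
  (∀ x y z, bchar q (x * y) z = bchar q x z * bchar q y z) ∧
  (∀ x y z, bchar q x (y * z) = bchar q x y * bchar q x z) ∧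
  (∀ x, q x = q x⁻¹)

/-- `A₀`, the kernel of the associated bicharacter. -/
def A0 (q : A → ℂˣ) : Set A := {x | ∀ y, q (x * y) = q x * q y}

/-- The symmetric bicharacter `c(x,y) = (−1)^{q̂(x)q̂(y)}` on `A₀`. -/
noncomputable def cc (q : A → ℂˣ) (x y : A) : ℂˣ := if q x = -1 ∧ q y = -1 then -1 else 1

/-- Inhomogeneous differential on 2-cochains (trivial action). -/
def d2 {X M : Type*} [Monoid X] [CommGroup M] (l : X → X → M) : X → X → X → M :=
  fun a b c => l b c * (l (a * b) c)⁻¹ * l a (b * c) * (l a b)⁻¹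

/-- Inhomogeneous differential on 3-cochains (trivial action). -/
def d3 {X M : Type*} [Monoid X] [CommGroup M] (w : X → X → X → M) : X → X → X → X → M :=
  fun a b c d => w b c d * (w (a * b) c d)⁻¹ * w a (b * c) d * (w a b (c * d))⁻¹ * w a b c

/-- An associative zesting datum of `(A,q)`. -/
def IsAssocZesting (q : A → ℂˣ) (l : (A →* ℂˣ) → (A →* ℂˣ) → A)
    (w : (A →* ℂˣ) → (A →* ℂˣ) → (A →* ℂˣ) → ℂˣ) : Prop :=
  (∀ χ₁ χ₂, l χ₁ χ₂ ∈ A0 q) ∧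
  (∀ χ₁ χ₂ χ₃, d2 l χ₁ χ₂ χ₃ = 1) ∧
  (∀ χ₁ χ₂ χ₃ χ₄, d3 w χ₁ χ₂ χ₃ χ₄ = cc q (l χ₁ χ₂) (l χ₃ χ₄))

/-- A braided zesting datum of `(A,q)`. -/
def IsBraidedZesting (q : A → ℂˣ) (l : (A →* ℂˣ) → (A →* ℂˣ) → A)
    (w : (A →* ℂˣ) → (A →* ℂˣ) → (A →* ℂˣ) → ℂˣ)
    (t : (A →* ℂˣ) → (A →* ℂˣ) → ℂˣ) : Prop :=
  IsAssocZesting q l w ∧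
  (∀ χ₁ χ₂, l χ₁ χ₂ = l χ₂ χ₁) ∧
  (∀ χ₁ χ₂ χ₃,
    w χ₁ χ₂ χ₃ * w χ₂ χ₃ χ₁ / w χ₂ χ₁ χ₃ = t χ₁ χ₂ * t χ₁ χ₃ / t χ₁ (χ₂ * χ₃)) ∧
  (∀ χ₁ χ₂ χ₃,
    χ₃ (l χ₁ χ₂) =
      (w χ₁ χ₂ χ₃ * w χ₃ χ₁ χ₂ / w χ₁ χ₃ χ₂) * (t χ₁ χ₃ * t χ₂ χ₃ / t (χ₁ * χ₂) χ₃))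

/-- A ribbon zesting datum of `(A,q)`: a braided zesting datum together with
`f : Â → ℂˣ` satisfying the two ribbon equations. -/
def IsRibbonZesting (q : A → ℂˣ) (l : (A →* ℂˣ) → (A →* ℂˣ) → A)
    (w : (A →* ℂˣ) → (A →* ℂˣ) → (A →* ℂˣ) → ℂˣ)
    (t : (A →* ℂˣ) → (A →* ℂˣ) → ℂˣ) (f : (A →* ℂˣ) → ℂˣ) : Prop :=
  IsBraidedZesting q l w t ∧
  (∀ χ₁ χ₂,
    f (χ₁ * χ₂) * (χ₁ * χ₂) (l χ₁ χ₂) * q (l χ₁ χ₂) =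
      f χ₁ * f χ₂ * (t χ₁ χ₂ / t χ₂ χ₁)) ∧
  (∀ χ, f χ / f χ⁻¹ = q (l χ χ⁻¹) * χ (l χ χ⁻¹))

/-- (i) The ratio of two ribbon structures on a fixed braided
zesting datum is a homomorphism `Â → {±1}`; (ii) twisting a ribbon structure
by any homomorphism `Â → {±1}` gives another ribbon structure. Hence the set
of ribbon zesting data extending a fixed braided zesting datum, if nonempty,
is a torsor over `Hom(Â, {±1})`. -/
theorem statement9 [Finite A] (q : A → ℂˣ) (hq : IsPreMetric q)
    (l : (A →* ℂˣ) → (A →* ℂˣ) → A)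
    (w : (A →* ℂˣ) → (A →* ℂˣ) → (A →* ℂˣ) → ℂˣ)
    (t : (A →* ℂˣ) → (A →* ℂˣ) → ℂˣ)
    (hbz : IsBraidedZesting q l w t) :
    (∀ f f' : (A →* ℂˣ) → ℂˣ,
      IsRibbonZesting q l w t f → IsRibbonZesting q l w t f' →
        ∃ h : (A →* ℂˣ) →* ℂˣ,
          (∀ χ, h χ = f χ / f' χ) ∧ (∀ χ, h χ = 1 ∨ h χ = -1)) ∧
    (∀ (f : (A →* ℂˣ) → ℂˣ) (χ₀ : (A →* ℂˣ) →* ℂˣ),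
      IsRibbonZesting q l w t f → (∀ χ, χ₀ χ = 1 ∨ χ₀ χ = -1) →
        IsRibbonZesting q l w t (fun χ => f χ * χ₀ χ)) := by
  constructor
  · -- Part (i)
    intro f f' hf hf'
    set g : (A →* ℂˣ) → ℂˣ := fun χ => f χ / f' χ with hg
    have gmul : ∀ χ₁ χ₂, g (χ₁ * χ₂) = g χ₁ * g χ₂ := by
      intro χ₁ χ₂
      have e1 : f (χ₁ * χ₂) * ((χ₁ * χ₂) (l χ₁ χ₂) * q (l χ₁ χ₂)) =
          f χ₁ * (f χ₂ * (t χ₁ χ₂ / t χ₂ χ₁)) := by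
        rw [← mul_assoc, ← mul_assoc]; exact hf.2.1 χ₁ χ₂
      have e2 : f' (χ₁ * χ₂) * ((χ₁ * χ₂) (l χ₁ χ₂) * q (l χ₁ χ₂)) =
          f' χ₁ * (f' χ₂ * (t χ₁ χ₂ / t χ₂ χ₁)) := by
        rw [← mul_assoc, ← mul_assoc]; exact hf'.2.1 χ₁ χ₂
      have key : g (χ₁ * χ₂) = (f χ₁ / f' χ₁) * (f χ₂ * (t χ₁ χ₂ / t χ₂ χ₁)
          / (f' χ₂ * (t χ₁ χ₂ / t χ₂ χ₁))) := by
        rw [hg]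
        calc f (χ₁ * χ₂) / f' (χ₁ * χ₂)
            = f χ₁ * (f χ₂ * (t χ₁ χ₂ / t χ₂ χ₁))
              / (f' χ₁ * (f' χ₂ * (t χ₁ χ₂ / t χ₂ χ₁))) := ratio_eq e1 e2
          _ = _ := mul_div_mul_comm _ _ _ _
      rw [key, mul_div_mul_right_eq_div]
    have gone : g 1 = 1 := by
      have h := gmul 1 1
      rw [show (1 : A →* ℂˣ) * 1 = 1 from mul_one (1 : A →* ℂˣ)] at h
      exact left_eq_mul.mp h
    refine ⟨⟨⟨g, gone⟩, gmul⟩, fun χ => rfl, ?_⟩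
    intro χ
    have hinv : g χ = g χ⁻¹ := by
      have e : f χ / f χ⁻¹ = f' χ / f' χ⁻¹ := by
        rw [hf.2.2 χ, hf'.2.2 χ]
      rw [hg]
      rw [div_eq_div_iff_mul_eq_mul] at e ⊢
      exact e.trans (mul_comm _ _)
    have hmap : (⟨⟨g, gone⟩, gmul⟩ : (A →* ℂˣ) →* ℂˣ) χ⁻¹ = (g χ)⁻¹ := by
      exact map_inv (⟨⟨g, gone⟩, gmul⟩ : (A →* ℂˣ) →* ℂˣ) χ
    have hsq : g χ * g χ = 1 := by
      have : g χ⁻¹ = (g χ)⁻¹ := hmap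
      rw [mul_comm]
      calc g χ * g χ = g χ * g χ⁻¹ := by rw [← hinv]
        _ = g χ * (g χ)⁻¹ := by rw [this]
        _ = 1 := mul_inv_cancel _
    exact pm_one hsq
  · -- Part (ii)
    intro f χ₀ hf hχ₀
    refine ⟨hf.1, ?_, ?_⟩
    · intro χ₁ χ₂
      have e1 := hf.2.1 χ₁ χ₂
      have e2 := congrArg (· * (χ₀ χ₁ * χ₀ χ₂)) e1
      show f (χ₁ * χ₂) * χ₀ (χ₁ * χ₂) * (χ₁ * χ₂) (l χ₁ χ₂) * q (l χ₁ χ₂) =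
        f χ₁ * χ₀ χ₁ * (f χ₂ * χ₀ χ₂) * (t χ₁ χ₂ / t χ₂ χ₁)
      rw [map_mul χ₀]
      calc f (χ₁ * χ₂) * (χ₀ χ₁ * χ₀ χ₂) * (χ₁ * χ₂) (l χ₁ χ₂) * q (l χ₁ χ₂)
          = f (χ₁ * χ₂) * (χ₁ * χ₂) (l χ₁ χ₂) * q (l χ₁ χ₂) * (χ₀ χ₁ * χ₀ χ₂) := by
            simp only [mul_comm, mul_left_comm, mul_assoc]
        _ = f χ₁ * f χ₂ * (t χ₁ χ₂ / t χ₂ χ₁) * (χ₀ χ₁ * χ₀ χ₂) := e2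
        _ = f χ₁ * χ₀ χ₁ * (f χ₂ * χ₀ χ₂) * (t χ₁ χ₂ / t χ₂ χ₁) := by
            simp only [mul_comm, mul_left_comm, mul_assoc]
    · intro χ
      have hu : χ₀ χ * χ₀ χ = 1 := by
        rcases hχ₀ χ with h | h <;> rw [h] <;> simp
      show f χ * χ₀ χ / (f χ⁻¹ * χ₀ χ⁻¹) = q (l χ χ⁻¹) * χ (l χ χ⁻¹)
      rw [map_inv χ₀, mul_div_mul_comm, div_inv_eq_mul, hu, mul_one]
      exact hf.2.2 χ

end Zesting
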